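/- Let Γ be a simple directed graph without oriented cycles and at most one edge between vertices. If Γ contains no oriented cycles at all on any subset of vertices (i.e., Γ is acyclic), then the number of idempotents of HK_Γ is 2^n where n = |V(Γ)|. -/

import Mathlib

/-- One-step Hecke-Kiselman edge relations for a directed graph with edge relation `E`. -/
def HKRel {V : Type*} (E : V → V → Prop) : FreeMonoid V → FreeMonoid V → Prop := fun a b =>
  (∃ x : V, a = FreeMonoid.of x * FreeMonoid.of x ∧ b = FreeMonoid.of x) ∨
  (∃ x y : V, x ≠ y ∧ ¬ E x y ∧ ¬ E y x ∧
    a = FreeMonoid.of x * FreeMonoid.of y ∧ b = FreeMonoid.of y * FreeMonoid.of x) ∨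
  (∃ x y : V, E x y ∧ ¬ E y x ∧
    a = FreeMonoid.of x * FreeMonoid.of y * FreeMonoid.of x ∧
    b = FreeMonoid.of y * FreeMonoid.of x * FreeMonoid.of y) ∨
  (∃ x y : V, E x y ∧ ¬ E y x ∧
    a = FreeMonoid.of x * FreeMonoid.of y * FreeMonoid.of x ∧
    b = FreeMonoid.of x * FreeMonoid.of y) ∨
  (∃ x y : V, E x y ∧ E y x ∧
    a = FreeMonoid.of x * FreeMonoid.of y * FreeMonoid.of x ∧
    b = FreeMonoid.of y * FreeMonoid.of x * FreeMonoid.of y)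

/-- The congruence on the free monoid generated by the Hecke-Kiselman relations. -/
def HKCon {V : Type*} (E : V → V → Prop) : Con (FreeMonoid V) := conGen (HKRel E)

/-- The Hecke-Kiselman monoid of the directed graph `(V, E)`. -/
def HK {V : Type*} (E : V → V → Prop) := (HKCon E).Quotient

instance {V : Type*} (E : V → V → Prop) : Monoid (HK E) :=
  inferInstanceAs (Monoid (HKCon E).Quotient)

/-- The canonical quotient map. -/
def HKmk {V : Type*} (E : V → V → Prop) : FreeMonoid V →* HK E := (HKCon E).mk'

/-- The content of an element: vertices occurring in some representing word. -/
def elemContent {V : Type*} (E : V → V → Prop) (x : HK E) : Set V :=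
  {v | ∃ w : FreeMonoid V, HKmk E w = x ∧ v ∈ FreeMonoid.toList w}

namespace HKaux

variable {V : Type*} (E : V → V → Prop)

/-- quotient of a list word -/
noncomputable def mkw (l : List V) : HK E := HKmk E (FreeMonoid.ofList l)

lemma mkw_append (l1 l2 : List V) : mkw E (l1 ++ l2) = mkw E l1 * mkw E l2 := by
  simp [mkw, FreeMonoid.ofList_append, map_mul]

lemma mkw_nil : mkw E ([] : List V) = 1 := by simp [mkw]

lemma mkw_cons (x : V) (l : List V) : mkw E (x :: l) = mkw E [x] * mkw E l := by
  simpa using mkw_append E [x] l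

variable {E}

lemma hk_rel {a b : FreeMonoid V} (h : HKRel E a b) : HKmk E a = HKmk E b := by
  change ((a : (HKCon E).Quotient)) = b
  exact Con.eq _ |>.mpr (ConGen.Rel.of _ _ h)

lemma gen_idem (x : V) : mkw E [x] * mkw E [x] = mkw E [x] := by
  have := hk_rel (a := FreeMonoid.of x * FreeMonoid.of x) (b := FreeMonoid.of x)
    (E := E) (Or.inl ⟨x, rfl, rfl⟩)
  simpa [mkw, FreeMonoid.ofList_singleton, map_mul] using this

lemma gen_comm {x y : V} (hxy : x ≠ y) (h1 : ¬ E x y) (h2 : ¬ E y x) :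
    mkw E [x] * mkw E [y] = mkw E [y] * mkw E [x] := by
  have := hk_rel (E := E) (a := FreeMonoid.of x * FreeMonoid.of y)
    (b := FreeMonoid.of y * FreeMonoid.of x) (Or.inr (Or.inl ⟨x, y, hxy, h1, h2, rfl, rfl⟩))
  simpa [mkw, FreeMonoid.ofList_singleton, map_mul] using this

lemma gen_braid {x y : V} (h1 : E x y) (h2 : ¬ E y x) :
    mkw E [x] * mkw E [y] * mkw E [x] = mkw E [y] * mkw E [x] * mkw E [y] := by
  have := hk_rel (E := E) (a := FreeMonoid.of x * FreeMonoid.of y * FreeMonoid.of x)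
    (b := FreeMonoid.of y * FreeMonoid.of x * FreeMonoid.of y)
    (Or.inr (Or.inr (Or.inl ⟨x, y, h1, h2, rfl, rfl⟩)))
  simpa [mkw, FreeMonoid.ofList_singleton, map_mul] using this

lemma gen_absL {x y : V} (h1 : E x y) (h2 : ¬ E y x) :
    mkw E [x] * mkw E [y] * mkw E [x] = mkw E [x] * mkw E [y] := by
  have := hk_rel (E := E) (a := FreeMonoid.of x * FreeMonoid.of y * FreeMonoid.of x)
    (b := FreeMonoid.of x * FreeMonoid.of y)
    (Or.inr (Or.inr (Or.inr (Or.inl ⟨x, y, h1, h2, rfl, rfl⟩))))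
  simpa [mkw, FreeMonoid.ofList_singleton, map_mul] using this

/-- for an edge z → a : a z a = z a -/
lemma gen_absR {z a : V} (h1 : E z a) (h2 : ¬ E a z) :
    mkw E [a] * mkw E [z] * mkw E [a] = mkw E [z] * mkw E [a] := by
  have b := gen_braid h1 h2
  have l := gen_absL h1 h2
  rw [← b, l]

end HKaux

namespace HKaux
variable {V : Type*} {E : V → V → Prop}

/-- Sink contextual lemma: if `a` has no edges into any letter of `u`, then
`a * u * (a * X) = u * (a * X)`. -/
lemma sink_ctx {a : V} (u : List V) (h : ∀ x ∈ u, ¬ E a x) :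
    ∀ X : HK E, mkw E [a] * (mkw E u * (mkw E [a] * X)) = mkw E u * (mkw E [a] * X) := by
  induction u using List.reverseRecOn with
  | nil =>
    intro X
    simp only [mkw_nil, one_mul]
    rw [← mul_assoc, gen_idem]
  | append_singleton u' z ih =>
    intro X
    have hu' : ∀ x ∈ u', ¬ E a x := fun x hx => h x (by simp [hx])
    have haz : ¬ E a z := h z (by simp)
    rw [mkw_append]
    simp only [mul_assoc]
    by_cases hza : z = a
    · subst hza
      have e : mkw E [z] * (mkw E [z] * X) = mkw E [z] * X := by
        rw [← mul_assoc, gen_idem]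
      rw [e]
      exact ih hu' X
    · by_cases hEza : E z a
      · have habs := gen_absR (E := E) hEza haz
        have e : mkw E [a] * (mkw E [z] * (mkw E [a] * X)) = mkw E [z] * (mkw E [a] * X) := by
          simp only [← mul_assoc]
          rw [habs]
        rw [← e]
        exact ih hu' _
      · have hc : mkw E [z] * mkw E [a] = mkw E [a] * mkw E [z] :=
          gen_comm hza hEza haz
        have e : mkw E [z] * (mkw E [a] * X) = mkw E [a] * (mkw E [z] * X) := by
          rw [← mul_assoc, hc, mul_assoc]
        rw [e]
        exact ih hu' _

/-- Source contextual lemma: if no letter of `u` has an edge into `a`, then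
`a * (u * (a * X)) = a * (u * X)`. -/
lemma src_ctx {a : V} (u : List V) (h : ∀ x ∈ u, ¬ E x a) :
    ∀ X : HK E, mkw E [a] * (mkw E u * (mkw E [a] * X)) = mkw E [a] * (mkw E u * X) := by
  induction u with
  | nil =>
    intro X
    simp only [mkw_nil, one_mul]
    rw [← mul_assoc, gen_idem]
  | cons z u' ih =>
    intro X
    have hu' : ∀ x ∈ u', ¬ E x a := fun x hx => h x (by simp [hx])
    have hza : ¬ E z a := h z (by simp)
    rw [mkw_cons E z u']
    simp only [mul_assoc]
    by_cases hzea : z = a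
    · subst hzea
      have ee : ∀ Y : HK E, mkw E [z] * (mkw E [z] * Y) = mkw E [z] * Y := fun Y => by
        rw [← mul_assoc, gen_idem]
      rw [ee, ee]
      exact ih hu' X
    · by_cases hEaz : E a z
      · have habs := gen_absL (E := E) hEaz hza
        have e : ∀ Y : HK E, mkw E [a] * (mkw E [z] * (mkw E [a] * Y))
            = mkw E [a] * (mkw E [z] * Y) := by
          intro Y
          simp only [← mul_assoc]
          rw [habs]
        rw [← e (mkw E u' * (mkw E [a] * X)), ih hu' X, e]
      · have hc : mkw E [z] * mkw E [a] = mkw E [a] * mkw E [z] :=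
          gen_comm hzea hza hEaz
        have e2 : ∀ Y : HK E, mkw E [z] * (mkw E [a] * Y) = mkw E [a] * (mkw E [z] * Y) := by
          intro Y
          rw [← mul_assoc, hc, mul_assoc]
        rw [← e2 (mkw E u' * (mkw E [a] * X)), ih hu' X, e2]

end HKaux

namespace HKaux
variable {V : Type*} {E : V → V → Prop}

lemma sink_absorb {a : V} (u : List V) (h : ∀ x ∈ u, ¬ E a x) :
    mkw E [a] * (mkw E u * mkw E [a]) = mkw E u * mkw E [a] := by
  have := sink_ctx u h (1 : HK E)
  simpa using this

lemma src_absorb {a : V} (u : List V) (h : ∀ x ∈ u, ¬ E x a) :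
    mkw E [a] * (mkw E u * mkw E [a]) = mkw E [a] * mkw E u := by
  have := src_ctx u h (1 : HK E)
  simpa using this

/-- Removing all non-final occurrences of a sink letter. -/
lemma filt [DecidableEq V] {a : V} (p : List V) (h : ∀ x ∈ p, ¬ E a x) :
    mkw E (p ++ [a]) = mkw E (p.filter (fun z => z ≠ a) ++ [a]) := by
  induction p with
  | nil => simp
  | cons z p' ih =>
    have hp' : ∀ x ∈ p', ¬ E a x := fun x hx => h x (by simp [hx])
    by_cases hza : z = a
    · subst hza
      have : (z :: p').filter (fun w => w ≠ z) = p'.filter (fun w => w ≠ z) := by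
        simp
      rw [this, ← ih hp']
      rw [List.cons_append, mkw_cons E z (p' ++ [z]), mkw_append]
      exact sink_absorb p' hp'
    · have : (z :: p').filter (fun w => w ≠ a) = z :: p'.filter (fun w => w ≠ a) := by
        simp [hza]
      rw [this, List.cons_append, List.cons_append, mkw_cons E z (p' ++ [a]),
        mkw_cons E z (List.filter (fun w => w ≠ a) p' ++ [a]), ih hp']

/-- last-occurrence decomposition -/
lemma exists_last {a : V} {l : List V} (h : a ∈ l) :
    ∃ p q, l = p ++ a :: q ∧ a ∉ q := by
  induction l with
  | nil => simp at h
  | cons x t ih =>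
    by_cases hat : a ∈ t
    · obtain ⟨p, q, rfl, hq⟩ := ih hat
      exact ⟨x :: p, q, rfl, hq⟩
    · have hax : a = x := by
        rcases List.mem_cons.mp h with h' | h'
        · exact h'
        · exact absurd h' hat
      exact ⟨[], t, by simp [hax], hat⟩

/-- generic power formula in a monoid -/
lemma pow_formula {M : Type*} [Monoid M] (x a q : M)
    (h : a * (q * (x * a)) = q * (x * a)) :
    ∀ n, (x * a * q) ^ (n + 1) = x * ((q * x) ^ n * (a * q)) := by
  intro n
  induction n with
  | zero => simp [mul_assoc]
  | succ n ih =>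
    have h' : ∀ Y : M, a * (q * (x * (a * Y))) = q * (x * (a * Y)) := by
      intro Y
      have := congrArg (· * Y) h
      simpa [mul_assoc] using this
    rw [pow_succ, ih]
    simp only [mul_assoc, pow_succ]
    rw [h' q]

end HKaux

namespace HKaux
variable {V : Type*} {E : V → V → Prop}

/-- The congruence of "same set of letters". -/
def contCon (V : Type*) [DecidableEq V] : Con (FreeMonoid V) where
  r a b := (FreeMonoid.toList a).toFinset = (FreeMonoid.toList b).toFinset
  iseqv := ⟨fun _ => rfl, Eq.symm, Eq.trans⟩
  mul' h1 h2 := by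
    simp only [FreeMonoid.toList_mul, List.toFinset_append]
    rw [h1, h2]

lemma hkcon_le_contCon [DecidableEq V] : HKCon E ≤ contCon V := by
  refine Con.conGen_le.mpr ?_
  rintro x y (⟨v, rfl, rfl⟩ | ⟨v, w, hne, h1, h2, rfl, rfl⟩ | ⟨v, w, h1, h2, rfl, rfl⟩ |
    ⟨v, w, h1, h2, rfl, rfl⟩ | ⟨v, w, h1, h2, rfl, rfl⟩) <;>
  · show (FreeMonoid.toList _).toFinset = (FreeMonoid.toList _).toFinset
    ext z
    simp only [FreeMonoid.toList_mul, FreeMonoid.toList_of, List.toFinset_append,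
      List.toFinset_cons, List.toFinset_nil, Finset.mem_union, Finset.mem_insert,
      Finset.mem_singleton, Finset.notMem_empty, or_false]
    tauto

/-- content of an element of `HK E` -/
noncomputable def cnt [DecidableEq V] (x : HK E) : Finset V :=
  Con.liftOn x (fun w => (FreeMonoid.toList w).toFinset)
    (fun a b h => hkcon_le_contCon h)

lemma cnt_mkw [DecidableEq V] (l : List V) : cnt (E := E) (mkw E l) = l.toFinset := rfl

end HKaux

namespace HKaux
variable {V : Type*} {E : V → V → Prop}

section Topo
variable (E) [DecidableEq V]
variable (hs : ∀ S : Finset V, S.Nonempty → ∃ a ∈ S, ∀ z ∈ S, ¬ E a z)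

/-- topological listing of a finite set, sinks last -/
noncomputable def topo (S : Finset V) : List V :=
  if h : S.Nonempty then
    topo (S.erase (hs S h).choose) ++ [(hs S h).choose]
  else []
termination_by S.card
decreasing_by
  exact Finset.card_erase_lt_of_mem (hs S h).choose_spec.1
lemma topo_spec : ∀ S : Finset V,
    (∀ x, x ∈ topo E hs S ↔ x ∈ S) ∧ (topo E hs S).Pairwise (fun x y => ¬ E y x) := by
  intro S
  induction S using Finset.strongInduction with
  | _ S ih =>
    by_cases h : S.Nonempty
    · set a := (hs S h).choose with ha
      have haS : a ∈ S := (hs S h).choose_spec.1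
      have hsink : ∀ z ∈ S, ¬ E a z := (hs S h).choose_spec.2
      have hrec := ih (S.erase a) (Finset.erase_ssubset haS)
      have hunf : topo E hs S = topo E hs (S.erase a) ++ [a] := by
        rw [topo]
        simp [h, ← ha]
      constructor
      · intro x
        rw [hunf]
        simp only [List.mem_append, List.mem_singleton, (hrec.1 x), Finset.mem_erase]
        constructor
        · rintro (⟨-, hx⟩ | rfl) <;> [exact hx; exact haS]
        · intro hx
          by_cases hxa : x = a
          · exact Or.inr hxa
          · exact Or.inl ⟨hxa, hx⟩
      · rw [hunf, List.pairwise_append]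
        refine ⟨hrec.2, List.pairwise_singleton _ _, ?_⟩
        intro x hx y hy
        rw [List.mem_singleton] at hy
        subst hy
        exact hsink x (Finset.mem_of_mem_erase ((hrec.1 x).mp hx))
    · rw [topo]
      simp only [h, dite_false]
      constructor
      · intro x
        simp only [List.not_mem_nil, false_iff]
        intro hx
        exact h ⟨x, hx⟩
      · exact List.Pairwise.nil

end Topo
end HKaux

namespace HKaux
variable {V : Type*} {E : V → V → Prop}

lemma labs1 {l : List V} (hl : l.Pairwise (fun x y => ¬ E y x)) {z : V} (hz : z ∈ l) :
    mkw E [z] * mkw E l = mkw E l := by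
  obtain ⟨p, q, rfl⟩ := List.append_of_mem hz
  rw [List.pairwise_append] at hl
  obtain ⟨hp, hq, hpq⟩ := hl
  have hsink : ∀ x ∈ p, ¬ E z x := fun x hx => hpq x hx z (by simp)
  rw [mkw_append, mkw_cons E z q]
  exact sink_ctx p hsink (mkw E q)

lemma rabs1 {l : List V} (hl : l.Pairwise (fun x y => ¬ E y x)) {z : V} (hz : z ∈ l) :
    mkw E l * mkw E [z] = mkw E l := by
  obtain ⟨p, q, rfl⟩ := List.append_of_mem hz
  rw [List.pairwise_append] at hl
  obtain ⟨hp, hq, hpq⟩ := hl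
  have hsrc : ∀ y ∈ q, ¬ E y z := (List.pairwise_cons.mp hq).1
  rw [mkw_append, mkw_cons E z q]
  calc (mkw E p * (mkw E [z] * mkw E q)) * mkw E [z]
      = mkw E p * (mkw E [z] * (mkw E q * mkw E [z])) := by simp only [mul_assoc]
    _ = mkw E p * (mkw E [z] * mkw E q) := by rw [src_absorb q hsrc]

lemma labs {l : List V} (hl : l.Pairwise (fun x y => ¬ E y x)) :
    ∀ v : List V, (∀ x ∈ v, x ∈ l) → mkw E v * mkw E l = mkw E l := by
  intro v
  induction v with
  | nil => intro _; simp [mkw_nil]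
  | cons z v' ih =>
    intro hv
    rw [mkw_cons E z v', mul_assoc, ih (fun x hx => hv x (List.mem_cons_of_mem _ hx)),
      labs1 hl (hv z List.mem_cons_self)]

lemma rabs {l : List V} (hl : l.Pairwise (fun x y => ¬ E y x)) :
    ∀ v : List V, (∀ x ∈ v, x ∈ l) → mkw E l * mkw E v = mkw E l := by
  intro v
  induction v using List.reverseRecOn with
  | nil => intro _; simp [mkw_nil]
  | append_singleton v' z ih =>
    intro hv
    rw [mkw_append, ← mul_assoc, ih (fun x hx => hv x (by simp [hx])),
      rabs1 hl (hv z (by simp))]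

section Main
variable [DecidableEq V]
variable (hs : ∀ S : Finset V, S.Nonempty → ∃ a ∈ S, ∀ z ∈ S, ¬ E a z)

lemma main_lemma : ∀ S : Finset V, ∀ w : List V, w.toFinset = S →
    ∃ n : ℕ, mkw E w ^ (n + 1) = mkw E (topo E hs S) := by
  intro S
  induction S using Finset.strongInduction with
  | _ S ih =>
    intro w hw
    by_cases h : S.Nonempty
    · set a := (hs S h).choose with ha
      have haS : a ∈ S := (hs S h).choose_spec.1
      have hsink : ∀ z ∈ S, ¬ E a z := (hs S h).choose_spec.2
      have hunf : topo E hs S = topo E hs (S.erase a) ++ [a] := by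
        rw [topo]; simp [h, ← ha]
      have haw : a ∈ w := by rw [← List.mem_toFinset, hw]; exact haS
      obtain ⟨p, q, rfl, haq⟩ := exists_last haw
      have hSmem : ∀ x, x ∈ S ↔ x ∈ p ∨ x = a ∨ x ∈ q := by
        intro x
        rw [← hw]
        simp only [List.mem_toFinset, List.mem_append, List.mem_cons]
        try tauto
      set p' := p.filter (fun z => z ≠ a) with hp'
      set T := S.erase a with hT
      have hp'mem : ∀ x, x ∈ p' ↔ x ∈ p ∧ x ≠ a := by
        intro x; simp [hp', List.mem_filter]
      have hTfin : (q ++ p').toFinset = T := by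
        ext x
        simp only [List.mem_toFinset, List.mem_append, hT, Finset.mem_erase, hSmem, hp'mem]
        constructor
        · rintro (hq | ⟨hp, hne⟩)
          · exact ⟨fun hxa => haq (hxa ▸ hq), Or.inr (Or.inr hq)⟩
          · exact ⟨hne, Or.inl hp⟩
        · rintro ⟨hne, hp | rfl | hq⟩
          · exact Or.inr ⟨hp, hne⟩
          · exact absurd rfl hne
          · exact Or.inl hq
      obtain ⟨m, hm⟩ := ih T (Finset.erase_ssubset haS) (q ++ p') hTfin
      have hsinkp : ∀ x ∈ p, ¬ E a x := fun x hx => hsink x ((hSmem x).mpr (Or.inl hx))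
      have hsinkqp : ∀ x ∈ q ++ p', ¬ E a x := by
        intro x hx
        rcases List.mem_append.mp hx with hx | hx
        · exact hsink x ((hSmem x).mpr (Or.inr (Or.inr hx)))
        · exact hsink x ((hSmem x).mpr (Or.inl ((hp'mem x).mp hx).1))
      have hw1 : mkw E (p ++ a :: q) = mkw E p' * mkw E [a] * mkw E q := by
        rw [show p ++ a :: q = (p ++ [a]) ++ q by simp, mkw_append, filt p hsinkp, mkw_append]
      have habs : mkw E [a] * (mkw E q * (mkw E p' * mkw E [a]))
          = mkw E q * (mkw E p' * mkw E [a]) := by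
        have := sink_absorb (q ++ p') hsinkqp
        rw [mkw_append] at this
        simpa only [mul_assoc] using this
      have hpow := pow_formula (mkw E p') (mkw E [a]) (mkw E q) habs (m + 1)
      have hqx : mkw E q * mkw E p' = mkw E (q ++ p') := (mkw_append E q p').symm
      have htopoT := topo_spec E hs T
      have htopoS := topo_spec E hs S
      have hpsub : ∀ x ∈ p', x ∈ topo E hs T := by
        intro x hx
        rw [(htopoT.1 x)]
        obtain ⟨hxp, hxa⟩ := (hp'mem x).mp hx
        exact Finset.mem_erase.mpr ⟨hxa, (hSmem x).mpr (Or.inl hxp)⟩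
      have hqsub : ∀ x ∈ q, x ∈ topo E hs S := by
        intro x hx
        rw [(htopoS.1 x)]
        exact (hSmem x).mpr (Or.inr (Or.inr hx))
      refine ⟨m + 1, ?_⟩
      calc mkw E (p ++ a :: q) ^ (m + 1 + 1)
          = (mkw E p' * mkw E [a] * mkw E q) ^ (m + 1 + 1) := by rw [hw1]
        _ = mkw E p' * ((mkw E q * mkw E p') ^ (m + 1) * (mkw E [a] * mkw E q)) := hpow
        _ = mkw E p' * (mkw E (topo E hs T) * (mkw E [a] * mkw E q)) := by rw [hqx, hm]
        _ = (mkw E p' * mkw E (topo E hs T)) * (mkw E [a] * mkw E q) := by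
            rw [mul_assoc]
        _ = mkw E (topo E hs T) * (mkw E [a] * mkw E q) := by
            rw [labs htopoT.2 p' hpsub]
        _ = (mkw E (topo E hs T) * mkw E [a]) * mkw E q := by rw [mul_assoc]
        _ = mkw E (topo E hs S) * mkw E q := by rw [← mkw_append, ← hunf]
        _ = mkw E (topo E hs S) := rabs htopoS.2 q hqsub
    · have hS : S = ∅ := Finset.not_nonempty_iff_eq_empty.mp h
      subst hS
      have hw' : w = [] := by
        rw [← List.toFinset_eq_empty_iff]; exact hw
      have hunf : topo E hs (∅ : Finset V) = [] := by
        rw [topo]; simp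
      exact ⟨0, by simp [hw', mkw_nil, hunf]⟩

end Main
end HKaux


/-- If the finite graph `Γ` is acyclic (no oriented cycles at all), then the Hecke-Kiselman
monoid of `Γ` has exactly `2^n` idempotents, where `n` is the number of vertices. -/
theorem hk_acyclic_idempotent_count {V : Type*} [Fintype V] (E : V → V → Prop)
    (hbidir : ∀ x y, ¬ (E x y ∧ E y x)) (hloop : ∀ x, ¬ E x x)
    (hacyclic : ∀ x : V, ¬ Relation.TransGen E x x) :
    Nat.card {a : HK E // a * a = a} = 2 ^ Fintype.card V := by
  classical
  have hs : ∀ S : Finset V, S.Nonempty → ∃ a ∈ S, ∀ z ∈ S, ¬ E a z := by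
    intro S hS
    haveI : IsTrans V (fun a b : V => Relation.TransGen E b a) :=
      ⟨fun a b c h1 h2 => Relation.TransGen.trans h2 h1⟩
    haveI : IsIrrefl V (fun a b : V => Relation.TransGen E b a) :=
      ⟨fun a h => hacyclic a h⟩
    have wf := Finite.wellFounded_of_trans_of_irrefl (fun a b : V => Relation.TransGen E b a)
    obtain ⟨a, haS, hmin⟩ := wf.has_min (↑S : Set V) (Finset.coe_nonempty.mpr hS)
    exact ⟨a, haS, fun z hz hEaz => hmin z hz (Relation.TransGen.single hEaz)⟩
  let f : Finset V → {a : HK E // a * a = a} := fun S =>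
    ⟨HKaux.mkw E (HKaux.topo E hs S),
      HKaux.rabs (HKaux.topo_spec E hs S).2 _ (fun x hx => hx)⟩
  have htf : ∀ S : Finset V, (HKaux.topo E hs S).toFinset = S := by
    intro S
    ext x
    rw [List.mem_toFinset, (HKaux.topo_spec E hs S).1 x]
  have hinj : Function.Injective f := by
    intro S T hST
    have h := congrArg (fun x : {a : HK E // a * a = a} => HKaux.cnt (E := E) x.val) hST
    simp only [f, HKaux.cnt_mkw, htf] at h
    exact h
  have hsurj : Function.Surjective f := by
    rintro ⟨e, he⟩
    obtain ⟨w, hw⟩ := Con.mk'_surjective (c := HKCon E) e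
    have hew : HKaux.mkw E (FreeMonoid.toList w) = e := by
      show HKmk E (FreeMonoid.ofList (FreeMonoid.toList w)) = e
      rw [FreeMonoid.ofList_toList]
      exact hw
    obtain ⟨n, hn⟩ := HKaux.main_lemma hs ((FreeMonoid.toList w).toFinset)
      (FreeMonoid.toList w) rfl
    have hepow : ∀ k : ℕ, e ^ (k + 1) = e := by
      intro k
      induction k with
      | zero => simp
      | succ k ih => rw [pow_succ, ih, he]
    refine ⟨(FreeMonoid.toList w).toFinset, ?_⟩
    apply Subtype.ext
    show HKaux.mkw E (HKaux.topo E hs _) = e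
    rw [← hn, hew, hepow]
  have hb := Nat.card_eq_of_bijective f ⟨hinj, hsurj⟩
  rw [← hb, Nat.card_eq_fintype_card, Fintype.card_finset]
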